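/- Let K be a group acting on a countably infinite set N with no finite orbits. Then the uniform measure λ on LO(N) is K-ergodic: for every Borel set A ⊆ LO(N) such that λ(A △ g·A)=0 for every g∈K, one has λ(A)∈{0,1}. -/

import Mathlib

open MeasureTheory ENNReal

/-- `r` codes a (strict) linear ordering of `N`. -/
def IsLinOrder {N : Type*} (r : N → N → Bool) : Prop :=
  (∀ a, r a a = false) ∧
  (∀ a b c, r a b = true → r b c = true → r a c = true) ∧
  (∀ a b, a ≠ b → r a b = true ∨ r b a = true)

/-- `LO N`: the space of linear orderings of `N`, as a subspace of `{0,1}^{N×N}`. -/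
def LO (N : Type*) : Set (N → N → Bool) := {r | IsLinOrder r}

/-- The event that `a 0 < a 1 < ⋯ < a (n-1)`. -/
def ChainSet {N : Type*} (n : ℕ) (a : Fin n → N) : Set (N → N → Bool) :=
  {r | ∀ i j : Fin n, i < j → r (a i) (a j) = true}

/-- `lam` is the uniform measure on `LO N`: the Borel probability measure concentrated
on `LO N` giving each event `a 0 < ⋯ < a (n-1)` (for distinct `a i`) measure `1/n!`. -/
def IsUniformLO {N : Type*} (lam : Measure (N → N → Bool)) : Prop :=
  IsProbabilityMeasure lam ∧ lam (LO N) = 1 ∧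
  ∀ (n : ℕ) (a : Fin n → N), Function.Injective a →
    lam (ChainSet n a) = ((n.factorial : ℝ≥0∞))⁻¹

section Dev
variable {N : Type*}

/-- the action of a bijection of `N` on orderings -/
def obMap (π : N ≃ N) : (N → N → Bool) → (N → N → Bool) := fun r a b => r (π.symm a) (π.symm b)

lemma measurable_obMap (π : N ≃ N) : Measurable (obMap π) := by
  apply measurable_pi_lambda
  intro a
  apply measurable_pi_lambda
  intro b
  exact (measurable_pi_apply _).comp (measurable_pi_apply _)

lemma obMap_leftInv (π : N ≃ N) : Function.LeftInverse (obMap π.symm) (obMap π) := by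
  intro r; funext a b; simp [obMap]

lemma obMap_preimage_chainSet (π : N ≃ N) (n : ℕ) (a : Fin n → N) :
    obMap π ⁻¹' ChainSet n a = ChainSet n (fun i => π.symm (a i)) := rfl

lemma obMap_mem_LO (π : N ≃ N) {r : N → N → Bool} (hr : r ∈ LO N) : obMap π r ∈ LO N := by
  obtain ⟨h1, h2, h3⟩ := hr
  refine ⟨fun a => h1 _, fun a b c hab hbc => h2 _ _ _ hab hbc, fun a b hab => h3 _ _ ?_⟩
  exact fun h => hab (π.symm.injective h)

lemma obMap_preimage_LO (π : N ≃ N) : obMap π ⁻¹' LO N = LO N := by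
  ext r
  constructor
  · intro hr
    have := obMap_mem_LO π.symm hr
    rwa [obMap_leftInv π r] at this
  · exact fun hr => obMap_mem_LO π hr

/-- conjunction-of-coordinates events, our π-system -/
def ESet (S : Finset (N × N)) : Set (N → N → Bool) := {r | ∀ p ∈ S, r p.1 p.2 = true}

lemma measurableSet_single (a b : N) (c : Bool) : MeasurableSet {r : N → N → Bool | r a b = c} := by
  have : Measurable (fun r : N → N → Bool => r a b) :=
    (measurable_pi_apply _).comp (measurable_pi_apply _)
  exact this (MeasurableSet.singleton c)

lemma measurableSet_ESet (S : Finset (N × N)) : MeasurableSet (ESet S) := by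
  have : ESet S = ⋂ p ∈ S, {r : N → N → Bool | r p.1 p.2 = true} := by
    ext r; simp [ESet]
  rw [this]
  exact MeasurableSet.biInter S.countable_toSet (fun p _ => measurableSet_single _ _ _)

lemma measurableSet_chainSet (n : ℕ) (a : Fin n → N) : MeasurableSet (ChainSet n a) := by
  have : ChainSet n a = ⋂ (i : Fin n) (j : Fin n) (_ : i < j),
      {r : N → N → Bool | r (a i) (a j) = true} := by
    ext r; simp [ChainSet]
  rw [this]
  exact MeasurableSet.iInter fun i => MeasurableSet.iInter fun j =>
    MeasurableSet.iInter fun _ => measurableSet_single _ _ _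

lemma measurableSet_LO [Countable N] : MeasurableSet (LO N) := by
  have : LO N = (⋂ a : N, {r : N → N → Bool | r a a = false}) ∩
      ((⋂ (a : N) (b : N) (c : N), ({r : N → N → Bool | r a b = true}ᶜ ∪
          {r : N → N → Bool | r b c = true}ᶜ ∪ {r : N → N → Bool | r a c = true})) ∩
       (⋂ (a : N) (b : N), {r : N → N → Bool | a ≠ b → r a b = true ∨ r b a = true})) := by
    ext r
    simp only [LO, IsLinOrder, Set.mem_setOf_eq, Set.mem_inter_iff, Set.mem_iInter,
      Set.mem_union, Set.mem_compl_iff]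
    constructor
    · rintro ⟨h1, h2, h3⟩
      refine ⟨h1, fun a b c => ?_, fun a b => h3 a b⟩
      by_cases hab : r a b = true
      · by_cases hbc : r b c = true
        · exact Or.inr (h2 a b c hab hbc)
        · exact Or.inl (Or.inr hbc)
      · exact Or.inl (Or.inl hab)
    · rintro ⟨h1, h2, h3⟩
      refine ⟨h1, fun a b c hab hbc => ?_, fun a b => h3 a b⟩
      rcases h2 a b c with (h | h) | h
      · exact absurd hab h
      · exact absurd hbc h
      · exact h
  rw [this]
  have hne : ∀ a b : N, MeasurableSet {r : N → N → Bool | a ≠ b → r a b = true ∨ r b a = true} := by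
    intro a b
    by_cases hab : a = b
    · simp [hab]
    · have : {r : N → N → Bool | a ≠ b → r a b = true ∨ r b a = true} =
        {r : N → N → Bool | r a b = true} ∪ {r : N → N → Bool | r b a = true} := by
        ext r; simp [hab]
      rw [this]
      exact (measurableSet_single a b true).union (measurableSet_single b a true)
  refine (MeasurableSet.iInter fun a => measurableSet_single a a false).inter
    ((MeasurableSet.iInter fun a => MeasurableSet.iInter fun b => MeasurableSet.iInter fun c =>
      (((measurableSet_single a b true).compl.union
        (measurableSet_single b c true).compl).union (measurableSet_single a c true))).inter
     (MeasurableSet.iInter fun a => MeasurableSet.iInter fun b => hne a b))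

lemma pi_le_of_singles {m : MeasurableSpace (N → N → Bool)}
    (h : ∀ a b : N, MeasurableSet[m] {r : N → N → Bool | r a b = true}) :
    (MeasurableSpace.pi : MeasurableSpace (N → N → Bool)) ≤ m := by
  intro s hs
  have hmeas : @Measurable _ _ m MeasurableSpace.pi (fun r => r) := by
    refine measurable_pi_lambda _ (fun a => ?_)
    refine measurable_pi_lambda _ (fun b => ?_)
    apply measurable_to_countable
    intro y
    rcases Bool.dichotomy (y a b)  with hy | hy <;> rw [hy]
    · have : (fun r : N → N → Bool => r a b) ⁻¹' {false} =
        {r : N → N → Bool | r a b = true}ᶜ := by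
        ext r; simp
      rw [this]; exact (h a b).compl
    · exact h a b
  exact hmeas hs

lemma isPiSystem_ESet : IsPiSystem (Set.range (ESet (N := N))) := by
  classical
  rintro _ ⟨S, rfl⟩ _ ⟨T, rfl⟩ -
  refine ⟨S ∪ T, ?_⟩
  ext r; simp [ESet]; aesop

lemma generateFrom_ESet :
    (MeasurableSpace.pi : MeasurableSpace (N → N → Bool)) =
      MeasurableSpace.generateFrom (Set.range (ESet (N := N))) := by
  refine le_antisymm (pi_le_of_singles fun a b => ?_) ?_
  · have : {r : N → N → Bool | r a b = true} = ESet {(a, b)} := by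
      ext r; simp [ESet]
    rw [this]
    exact MeasurableSpace.measurableSet_generateFrom ⟨_, rfl⟩
  · rw [MeasurableSpace.generateFrom_le_iff]
    rintro _ ⟨S, rfl⟩
    exact measurableSet_ESet S

end Dev
section Dev2
variable {N : Type*}

lemma bool_asymm {M : Type*} {t : M → M → Bool} (h1 : ∀ a, t a a = false)
    (h2 : ∀ a b c, t a b = true → t b c = true → t a c = true)
    {a b : M} (hab : t a b = true) : t b a = false := by
  by_contra h
  have hba : t b a = true := by simpa using h
  have := h2 a b a hab hba
  simp [h1 a] at this

lemma exists_sorted_equiv {M : Type*} [Fintype M] [DecidableEq M] (t : M → M → Bool)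
    (h1 : ∀ a, t a a = false)
    (h2 : ∀ a b c, t a b = true → t b c = true → t a c = true)
    (h3 : ∀ a b, a ≠ b → t a b = true ∨ t b a = true) :
    ∃ b : Fin (Fintype.card M) ≃ M, ∀ i j, i < j → t (b i) (b j) = true := by
  classical
  set f : M → ℕ := fun x => (Finset.univ.filter (fun y => t y x = true)).card with hf
  have fwd : ∀ x y : M, t x y = true → f x < f y := by
    intro x y hxy'
    apply Finset.card_lt_card
    rw [Finset.ssubset_iff_of_subset]
    · exact ⟨x, by simp [hxy'], by simp [h1 x]⟩
    · intro z hz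
      simp only [Finset.mem_filter] at hz ⊢
      exact ⟨hz.1, h2 z x y hz.2 hxy'⟩
  have key : ∀ x y, x ≠ y → (t x y = true ↔ f x < f y) := by
    intro x y hxy
    refine ⟨fwd x y, fun hlt => ?_⟩
    rcases h3 x y hxy with h | h
    · exact h
    · exact absurd (fwd y x h) (by omega)
  have finj : Function.Injective f := by
    intro x y hxy
    by_contra hne
    rcases h3 x y hne with h | h
    · have := fwd x y h; omega
    · have := fwd y x h; omega
  set e0 : Fin (Fintype.card M) ≃ M := (Fintype.equivFin M).symm with he0
  set g : Fin (Fintype.card M) → ℕ := f ∘ e0 with hg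
  have ginj : Function.Injective g := finj.comp e0.injective
  have gmono : StrictMono (g ∘ (Tuple.sort g)) :=
    (Tuple.monotone_sort g).strictMono_of_injective (ginj.comp (Tuple.sort g).injective)
  refine ⟨(Tuple.sort g).trans e0, fun i j hij => ?_⟩
  have hne : e0 ((Tuple.sort g) i) ≠ e0 ((Tuple.sort g) j) := by
    intro h
    have := (Tuple.sort g).injective (e0.injective h)
    omega
  exact (key _ _ hne).2 (gmono hij)

lemma strictMono_perm_eq_refl {n : ℕ} (τ : Equiv.Perm (Fin n)) (h : StrictMono τ) :
    ∀ i, τ i = i := by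
  intro i
  have : (StrictMono.orderIsoOfSurjective (⇑τ) h τ.surjective) = OrderIso.refl (Fin n) :=
    Subsingleton.elim _ _
  have := congrFun (congrArg (fun (f : Fin n ≃o Fin n) => (f : Fin n → Fin n)) this) i
  simpa using this

lemma chain_eq_of_mem {n : ℕ} {e : Fin n → N} (he : Function.Injective e)
    {r : N → N → Bool} (hr : r ∈ LO N) {σ σ' : Equiv.Perm (Fin n)}
    (h : r ∈ ChainSet n (e ∘ σ)) (h' : r ∈ ChainSet n (e ∘ σ')) : σ = σ' := by
  obtain ⟨h1, h2, h3⟩ := hr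
  by_contra hne
  set τ : Equiv.Perm (Fin n) := σ.trans σ'.symm with hτ
  have hτm : ¬ StrictMono (⇑τ) := by
    intro hmono
    apply hne
    refine Equiv.ext fun i => ?_
    have h5 := strictMono_perm_eq_refl τ hmono i
    simp only [hτ, Equiv.trans_apply] at h5
    have h6 := congrArg σ' h5
    simpa using h6
  rw [StrictMono] at hτm
  push_neg at hτm
  obtain ⟨i, j, hij, hji⟩ := hτm
  have hτne : τ i ≠ τ j := fun h => (ne_of_lt hij) (τ.injective h)
  have hji' : τ j < τ i := lt_of_le_of_ne hji (fun h => hτne h.symm)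
  have t1 : r (e (σ i)) (e (σ j)) = true := h i j hij
  have t2 : r (e (σ j)) (e (σ i)) = true := by
    have := h' (τ j) (τ i) hji'
    simpa only [Function.comp_apply, hτ, Equiv.trans_apply, Equiv.apply_symm_apply] using this
  have := h2 _ _ _ t1 t2
  simp [h1] at this

lemma lam_LO_compl {lam : Measure (N → N → Bool)} [Countable N] (hlam : IsUniformLO lam) :
    lam (LO N)ᶜ = 0 := by
  obtain ⟨hprob, hLO, -⟩ := hlam
  rw [measure_compl measurableSet_LO (measure_ne_top _ _), hLO, measure_univ]
  simp

lemma partition_measure {lam : Measure (N → N → Bool)} [Countable N] (hlam : IsUniformLO lam)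
    {n : ℕ} {e : Fin n → N} (he : Function.Injective e) {X : Set (N → N → Bool)} (hX : MeasurableSet X) :
    lam X = ∑ σ : Equiv.Perm (Fin n), lam (X ∩ ChainSet n (e ∘ σ)) := by
  classical
  have hLOc := lam_LO_compl hlam
  have cover : X ∩ LO N = ⋃ σ ∈ (Finset.univ : Finset (Equiv.Perm (Fin n))),
      (X ∩ ChainSet n (e ∘ σ)) ∩ LO N := by
    ext r
    simp only [Set.mem_iUnion, Finset.mem_univ, Set.mem_inter_iff, exists_prop, true_and]
    constructor
    · rintro ⟨hX, hr⟩
      obtain ⟨hr1, hr2, hr3⟩ := hr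
      obtain ⟨b, hb⟩ := exists_sorted_equiv (M := Fin n) (fun i j => r (e i) (e j))
        (fun i => hr1 _) (fun a b c => hr2 _ _ _)
        (fun a b hab => hr3 _ _ (fun h => hab (he h)))
      set σ : Equiv.Perm (Fin n) := (finCongr (Fintype.card_fin n)).symm.trans b with hσ
      refine ⟨σ, ⟨⟨hX, ?_⟩, hr1, hr2, hr3⟩⟩
      intro i j hij
      exact hb ((finCongr (Fintype.card_fin n)).symm i) ((finCongr (Fintype.card_fin n)).symm j)
        (by simp only [finCongr_symm, finCongr_apply, Fin.lt_def, Fin.coe_cast]; exact hij)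
    · rintro ⟨σ, ⟨hX, -⟩, hr⟩
      exact ⟨hX, hr⟩
  have hdisj : (((Finset.univ : Finset (Equiv.Perm (Fin n)))) : Set (Equiv.Perm (Fin n))).PairwiseDisjoint
      (fun σ => (X ∩ ChainSet n (e ∘ σ)) ∩ LO N) := by
    intro σ _ σ' _ hne
    refine Set.disjoint_left.mpr ?_
    rintro r ⟨⟨-, hc⟩, hr⟩ ⟨⟨-, hc'⟩, -⟩
    exact hne (chain_eq_of_mem he hr hc hc')
  calc lam X = lam (X ∩ LO N) := (measure_inter_conull hLOc).symm
    _ = ∑ σ : Equiv.Perm (Fin n), lam ((X ∩ ChainSet n (e ∘ σ)) ∩ LO N) := by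
        rw [cover]
        refine measure_biUnion_finset hdisj (fun σ _ => ?_)
        exact (hX.inter (measurableSet_chainSet _ _)).inter measurableSet_LO
    _ = ∑ σ : Equiv.Perm (Fin n), lam (X ∩ ChainSet n (e ∘ σ)) := by
        refine Finset.sum_congr rfl (fun σ _ => measure_inter_conull hLOc)

end Dev2
section Dev3
variable {N : Type*}

noncomputable instance (priority := 0) instDecCompat (p : Prop) : Decidable p :=
  Classical.dec p

def compatible {n : ℕ} (e : Fin n → N) (S : Finset (N × N)) (σ : Equiv.Perm (Fin n)) : Prop :=
  ∀ p ∈ S, ∃ i j : Fin n, i < j ∧ e (σ i) = p.1 ∧ e (σ j) = p.2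

lemma eval_ESet {lam : Measure (N → N → Bool)} [Countable N] (hlam : IsUniformLO lam)
    {n : ℕ} {e : Fin n → N} (he : Function.Injective e) (S : Finset (N × N))
    (hS : ∀ p ∈ S, p.1 ∈ Set.range e ∧ p.2 ∈ Set.range e) :
    lam (ESet S) = (Finset.univ.filter
        (fun σ : Equiv.Perm (Fin n) => compatible e S σ)).card * ((n.factorial : ℝ≥0∞))⁻¹ := by
  classical
  rw [partition_measure hlam he (measurableSet_ESet S)]
  have hterm : ∀ σ : Equiv.Perm (Fin n), lam (ESet S ∩ ChainSet n (e ∘ σ)) =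
      if compatible e S σ then ((n.factorial : ℝ≥0∞))⁻¹ else 0 := by
    intro σ
    by_cases hc : compatible e S σ
    · rw [if_pos hc]
      have hsub : ChainSet n (e ∘ σ) ∩ LO N ⊆ ESet S := by
        rintro r ⟨hch, -⟩ p hp
        obtain ⟨i, j, hij, hh1, hh2⟩ := hc p hp
        have := hch i j hij
        rwa [Function.comp_apply, Function.comp_apply, hh1, hh2] at this
      have hset : (ESet S ∩ ChainSet n (e ∘ σ)) ∩ LO N = ChainSet n (e ∘ σ) ∩ LO N := by
        ext r
        constructor
        · rintro ⟨⟨-, h2⟩, h3⟩; exact ⟨h2, h3⟩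
        · intro h; exact ⟨⟨hsub h, h.1⟩, h.2⟩
      calc lam (ESet S ∩ ChainSet n (e ∘ σ))
          = lam ((ESet S ∩ ChainSet n (e ∘ σ)) ∩ LO N) :=
            (measure_inter_conull (lam_LO_compl hlam)).symm
        _ = lam (ChainSet n (e ∘ σ) ∩ LO N) := by rw [hset]
        _ = lam (ChainSet n (e ∘ σ)) := measure_inter_conull (lam_LO_compl hlam)
        _ = ((n.factorial : ℝ≥0∞))⁻¹ := hlam.2.2 n _ (he.comp σ.injective)
    · rw [if_neg hc]
      have hset : (ESet S ∩ ChainSet n (e ∘ σ)) ∩ LO N = ∅ := by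
        ext r
        simp only [Set.mem_inter_iff, Set.mem_empty_iff_false, iff_false, not_and]
        rintro ⟨hE, hch⟩ hr
        obtain ⟨hr1, hr2, hr3⟩ := hr
        rw [compatible] at hc
        push_neg at hc
        obtain ⟨p, hp, hnc⟩ := hc
        obtain ⟨x, hx⟩ := (hS p hp).1
        obtain ⟨y, hy⟩ := (hS p hp).2
        rcases lt_trichotomy (σ.symm x) (σ.symm y) with h | h | h
        · exact (hnc _ _ h (by simpa using hx)) (by simpa using hy)
        · have hxy : x = y := by
            have := congrArg σ h
            simpa using this
          have hpp : p.2 = p.1 := by rw [← hy, ← hxy, hx]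
          have hcontra := hE p hp
          rw [hpp] at hcontra
          simp [hr1] at hcontra
        · have hba : r p.2 p.1 = true := by
            have := hch (σ.symm y) (σ.symm x) h
            simpa [hx, hy] using this
          have hab : r p.1 p.2 = true := hE p hp
          have := hr2 _ _ _ hab hba
          simp [hr1] at this
      calc lam (ESet S ∩ ChainSet n (e ∘ σ))
          = lam ((ESet S ∩ ChainSet n (e ∘ σ)) ∩ LO N) :=
            (measure_inter_conull (lam_LO_compl hlam)).symm
        _ = 0 := by rw [hset]; exact measure_empty
  rw [Finset.sum_congr rfl (fun σ _ => hterm σ)]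
  rw [Finset.sum_ite, Finset.sum_const, Finset.sum_const_zero, add_zero, nsmul_eq_mul]

end Dev3
section Dev4
variable {N : Type*}

lemma lam_map_eq {lam : Measure (N → N → Bool)} [Countable N] (hlam : IsUniformLO lam)
    (π : N ≃ N) {X : Set (N → N → Bool)} (hX : MeasurableSet X) :
    lam (obMap π ⁻¹' X) = lam X := by
  classical
  have hprob : IsProbabilityMeasure lam := hlam.1
  have hmap : Measure.map (obMap π) lam = lam := by
    have : IsProbabilityMeasure (Measure.map (obMap π) lam) :=
      Measure.isProbabilityMeasure_map (measurable_obMap π).aemeasurable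
    refine ext_of_generate_finite _ generateFrom_ESet isPiSystem_ESet ?_ (by simp)
    rintro _ ⟨S, rfl⟩
    rw [Measure.map_apply (measurable_obMap π) (measurableSet_ESet S)]
    have hpre : obMap π ⁻¹' ESet S =
        ESet (S.image (fun p => (π.symm p.1, π.symm p.2))) := by
      ext r
      simp only [ESet, Set.mem_preimage, Set.mem_setOf_eq, obMap, Finset.mem_image]
      constructor
      · rintro h q ⟨p, hp, rfl⟩
        exact h p hp
      · intro h p hp
        exact h (π.symm p.1, π.symm p.2) ⟨p, hp, rfl⟩
    rw [hpre]
    set V : Finset N := S.image Prod.fst ∪ S.image Prod.snd with hV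
    set n : ℕ := V.card with hn
    set e : Fin n → N := fun i => (V.equivFin.symm i : N) with he'
    have he : Function.Injective e := by
      intro i j h
      exact V.equivFin.symm.injective (Subtype.ext h)
    have hrange : ∀ p ∈ S, p.1 ∈ Set.range e ∧ p.2 ∈ Set.range e := by
      intro p hp
      constructor
      · have h1 : p.1 ∈ V := Finset.mem_union_left _ (Finset.mem_image_of_mem _ hp)
        exact ⟨V.equivFin ⟨p.1, h1⟩, by simp [he']⟩
      · have h1 : p.2 ∈ V := Finset.mem_union_right _ (Finset.mem_image_of_mem _ hp)
        exact ⟨V.equivFin ⟨p.2, h1⟩, by simp [he']⟩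
    have he2 : Function.Injective (fun i => π.symm (e i)) := π.symm.injective.comp he
    have hrange2 : ∀ p ∈ S.image (fun p => (π.symm p.1, π.symm p.2)),
        p.1 ∈ Set.range (fun i => π.symm (e i)) ∧ p.2 ∈ Set.range (fun i => π.symm (e i)) := by
      rintro q hq
      simp only [Finset.mem_image] at hq
      obtain ⟨p, hp, rfl⟩ := hq
      obtain ⟨⟨i, hi⟩, ⟨j, hj⟩⟩ := hrange p hp
      exact ⟨⟨i, by simpa using congrArg π.symm hi⟩, ⟨j, by simpa using congrArg π.symm hj⟩⟩
    rw [eval_ESet hlam he2 _ hrange2, eval_ESet hlam he S hrange]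
    have hfilt : (Finset.univ.filter (fun σ : Equiv.Perm (Fin n) =>
        compatible (fun i => π.symm (e i)) (S.image (fun p => (π.symm p.1, π.symm p.2))) σ)) =
        (Finset.univ.filter (fun σ : Equiv.Perm (Fin n) => compatible e S σ)) := by
      refine Finset.filter_congr (fun σ _ => ?_)
      constructor
      · intro h p hp
        obtain ⟨i, j, hij, h1, h2⟩ := h (π.symm p.1, π.symm p.2) (Finset.mem_image_of_mem _ hp)
        exact ⟨i, j, hij, π.symm.injective h1, π.symm.injective h2⟩
      · rintro h q hq
        simp only [Finset.mem_image] at hq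
        obtain ⟨p, hp, rfl⟩ := hq
        obtain ⟨i, j, hij, h1, h2⟩ := h p hp
        exact ⟨i, j, hij, by simpa using congrArg π.symm h1, by simpa using congrArg π.symm h2⟩
    rw [hfilt]
  conv_rhs => rw [← hmap]
  rw [Measure.map_apply (measurable_obMap π) hX]

lemma chain_indep {lam : Measure (N → N → Bool)} [Countable N] (hlam : IsUniformLO lam)
    {m n : ℕ} {a : Fin m → N} {b : Fin n → N} (ha : Function.Injective a)
    (hb : Function.Injective b) (hdisj : ∀ i j, a i ≠ b j) :
    lam (ChainSet m a ∩ ChainSet n b) =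
      ((m.factorial : ℝ≥0∞))⁻¹ * ((n.factorial : ℝ≥0∞))⁻¹ := by
  classical
  have hpart := partition_measure hlam hb (measurableSet_chainSet m a)
  have hterm : ∀ σ : Equiv.Perm (Fin n),
      lam (ChainSet m a ∩ ChainSet n (b ∘ σ)) = lam (ChainSet m a ∩ ChainSet n b) := by
    intro σ
    set f : Fin n ≃ {x // x ∈ Set.range b} := Equiv.ofInjective b hb with hf
    set π : Equiv.Perm N := Equiv.Perm.extendDomain σ.symm f with hπd
    have hπb : ∀ i, π (b i) = b (σ.symm i) := by
      intro i
      have := Equiv.Perm.extendDomain_apply_image σ.symm f i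
      simpa [hf, Equiv.ofInjective_apply] using this
    have hπa : ∀ i, π (a i) = a i := by
      intro i
      refine Equiv.Perm.extendDomain_apply_not_subtype σ.symm f ?_
      rintro ⟨j, hj⟩
      exact hdisj i j hj.symm
    have hpre : obMap π ⁻¹' (ChainSet m a ∩ ChainSet n b) =
        ChainSet m a ∩ ChainSet n (b ∘ σ) := by
      rw [Set.preimage_inter, obMap_preimage_chainSet, obMap_preimage_chainSet]
      have h1 : (fun i => π.symm (a i)) = a := by
        funext i; rw [Equiv.symm_apply_eq]; exact (hπa i).symm
      have h2 : (fun i => π.symm (b i)) = b ∘ σ := by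
        funext i
        have h3 : π (b (σ i)) = b i := by rw [hπb (σ i), Equiv.symm_apply_apply]
        rw [Function.comp_apply, Equiv.symm_apply_eq]
        exact h3.symm
      rw [h1, h2]
    rw [← hpre, lam_map_eq hlam π
      ((measurableSet_chainSet m a).inter (measurableSet_chainSet n b))]
  rw [Finset.sum_congr rfl (fun σ _ => hterm σ), Finset.sum_const, Finset.card_univ,
    Fintype.card_perm, Fintype.card_fin, nsmul_eq_mul] at hpart
  rw [hlam.2.2 m a ha] at hpart
  have hfac0 : ((n.factorial : ℝ≥0∞)) ≠ 0 := by
    simp [Nat.factorial_ne_zero]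
  have hfact : ((n.factorial : ℝ≥0∞)) ≠ ⊤ := by simp
  calc lam (ChainSet m a ∩ ChainSet n b)
      = ((n.factorial : ℝ≥0∞))⁻¹ * ((n.factorial : ℝ≥0∞)) *
        lam (ChainSet m a ∩ ChainSet n b) := by
        rw [ENNReal.inv_mul_cancel hfac0 hfact, one_mul]
    _ = ((n.factorial : ℝ≥0∞))⁻¹ * ((m.factorial : ℝ≥0∞))⁻¹ := by
        rw [mul_assoc, ← hpart]
    _ = ((m.factorial : ℝ≥0∞))⁻¹ * ((n.factorial : ℝ≥0∞))⁻¹ := mul_comm _ _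

end Dev4
section Dev5
variable {N : Type*}

def Atom (F : Finset N) (v : F → F → Bool) : Set (N → N → Bool) :=
  {r | ∀ x y : F, r x y = v x y}

lemma measurableSet_Atom (F : Finset N) (v : F → F → Bool) : MeasurableSet (Atom F v) := by
  have : Atom F v = ⋂ (x : F) (y : F), {r : N → N → Bool | r x y = v x y} := by
    ext r; simp [Atom]
  rw [this]
  exact MeasurableSet.iInter fun x => MeasurableSet.iInter fun y => measurableSet_single _ _ _

lemma atom_disjoint {F : Finset N} {v w : F → F → Bool} (h : v ≠ w) :
    Disjoint (Atom F v) (Atom F w) := by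
  refine Set.disjoint_left.mpr ?_
  intro r hv hw
  apply h
  funext x y
  rw [← hv x y, ← hw x y]

lemma atom_not_lo {F : Finset N} {v : F → F → Bool} (hv : ¬ IsLinOrder v) :
    Atom F v ∩ LO N = ∅ := by
  ext r
  simp only [Set.mem_inter_iff, Set.mem_empty_iff_false, iff_false, not_and]
  rintro hA ⟨h1, h2, h3⟩
  refine hv ⟨fun x => by rw [← hA x x]; exact h1 _, fun x y z hxy hyz => ?_, fun x y hxy => ?_⟩
  · rw [← hA x z]
    exact h2 _ _ _ (by rwa [hA x y]) (by rwa [hA y z])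
  · have : (x : N) ≠ (y : N) := fun h => hxy (Subtype.ext h)
    rcases h3 _ _ this with h | h
    · exact Or.inl (by rwa [← hA x y])
    · exact Or.inr (by rwa [← hA y x])

lemma atom_repr {F : Finset N} {v : F → F → Bool} (hv : IsLinOrder v) :
    ∃ a : Fin (Fintype.card F) → N, Function.Injective a ∧ (∀ i, a i ∈ F) ∧
      Atom F v ∩ LO N = ChainSet (Fintype.card F) a ∩ LO N := by
  classical
  obtain ⟨h1, h2, h3⟩ := hv
  obtain ⟨b, hb⟩ := exists_sorted_equiv v h1 h2 h3
  refine ⟨fun i => (b i : N), ?_, fun i => (b i).2, ?_⟩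
  · intro i j h
    exact b.injective (Subtype.ext h)
  · ext r
    simp only [Set.mem_inter_iff, and_congr_left_iff]
    intro hr
    obtain ⟨hr1, hr2, hr3⟩ := hr
    constructor
    · intro hA i j hij
      rw [hA (b i) (b j)]
      exact hb i j hij
    · intro hch x y
      rcases lt_trichotomy (b.symm x) (b.symm y) with h | h | h
      · have hvt : v x y = true := by
          have := hb _ _ h
          simpa only [b.apply_symm_apply] using this
        have hx : r x y = true := by
          have := hch _ _ h
          simpa only [b.apply_symm_apply] using this
        rw [hx, hvt]
      · have hxy : x = y := by
          have := congrArg b h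
          simpa using this
        rw [hxy, hr1, h1]
      · have hyx : r y x = true := by
          have := hch _ _ h
          simpa only [b.apply_symm_apply] using this
        have hvyx : v y x = true := by
          have := hb _ _ h
          simpa only [b.apply_symm_apply] using this
        rw [bool_asymm hr1 hr2 hyx, bool_asymm h1 h2 hvyx]

lemma lam_atom {lam : Measure (N → N → Bool)} [Countable N] (hlam : IsUniformLO lam)
    {F : Finset N} {v : F → F → Bool} (hv : IsLinOrder v) :
    lam (Atom F v) = (((Fintype.card F).factorial : ℝ≥0∞))⁻¹ := by
  obtain ⟨a, ha, -, hrepr⟩ := atom_repr hv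
  calc lam (Atom F v) = lam (Atom F v ∩ LO N) := (measure_inter_conull (lam_LO_compl hlam)).symm
    _ = lam (ChainSet (Fintype.card F) a ∩ LO N) := by rw [hrepr]
    _ = lam (ChainSet (Fintype.card F) a) := measure_inter_conull (lam_LO_compl hlam)
    _ = _ := hlam.2.2 _ a ha

lemma atom_indep {lam : Measure (N → N → Bool)} [Countable N] (hlam : IsUniformLO lam)
    {F G : Finset N} (hFG : Disjoint F G) (v : F → F → Bool) (w : G → G → Bool) :
    lam (Atom F v ∩ Atom G w) = lam (Atom F v) * lam (Atom G w) := by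
  have hconull := lam_LO_compl hlam
  by_cases hv : IsLinOrder v
  · by_cases hw : IsLinOrder w
    · obtain ⟨a, ha, haF, hra⟩ := atom_repr hv
      obtain ⟨b, hb, hbG, hrb⟩ := atom_repr hw
      have hdisj : ∀ i j, a i ≠ b j := by
        intro i j h
        exact Finset.disjoint_left.mp hFG (haF i) (h ▸ hbG j)
      have hint : Atom F v ∩ Atom G w ∩ LO N =
          (ChainSet _ a ∩ ChainSet _ b) ∩ LO N := by
        ext r
        constructor
        · rintro ⟨⟨h1, h2⟩, h3⟩
          exact ⟨⟨((Set.ext_iff.mp hra r).mp ⟨h1, h3⟩).1,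
                  ((Set.ext_iff.mp hrb r).mp ⟨h2, h3⟩).1⟩, h3⟩
        · rintro ⟨⟨h1, h2⟩, h3⟩
          exact ⟨⟨((Set.ext_iff.mp hra r).mpr ⟨h1, h3⟩).1,
                  ((Set.ext_iff.mp hrb r).mpr ⟨h2, h3⟩).1⟩, h3⟩
      calc lam (Atom F v ∩ Atom G w) = lam (Atom F v ∩ Atom G w ∩ LO N) :=
            (measure_inter_conull hconull).symm
        _ = lam ((ChainSet _ a ∩ ChainSet _ b) ∩ LO N) := by rw [hint]
        _ = lam (ChainSet _ a ∩ ChainSet _ b) := measure_inter_conull hconull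
        _ = (((Fintype.card F).factorial : ℝ≥0∞))⁻¹ *
            (((Fintype.card G).factorial : ℝ≥0∞))⁻¹ := chain_indep hlam ha hb hdisj
        _ = lam (Atom F v) * lam (Atom G w) := by rw [lam_atom hlam hv, lam_atom hlam hw]
    · have h0 : lam (Atom G w) = 0 := by
        rw [← measure_inter_conull (s := Atom G w) hconull, atom_not_lo hw, measure_empty]
      rw [h0, mul_zero]
      refine le_antisymm ?_ zero_le
      rw [← h0]
      exact measure_mono Set.inter_subset_right
  · have h0 : lam (Atom F v) = 0 := by
      rw [← measure_inter_conull (s := Atom F v) hconull, atom_not_lo hv, measure_empty]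
    rw [h0, zero_mul]
    refine le_antisymm ?_ zero_le
    rw [← h0]
    exact measure_mono Set.inter_subset_left

lemma cylinder_indep {lam : Measure (N → N → Bool)} [Countable N] (hlam : IsUniformLO lam)
    {F G : Finset N} (hFG : Disjoint F G) {B C : Set (N → N → Bool)}
    (hB : ∀ r r' : N → N → Bool, (∀ x y : F, r x y = r' x y) → r ∈ B → r' ∈ B)
    (hC : ∀ r r' : N → N → Bool, (∀ x y : G, r x y = r' x y) → r ∈ C → r' ∈ C) :
    lam (B ∩ C) = lam B * lam C := by
  classical
  set VB : Finset (F → F → Bool) := Finset.univ.filter (fun v => Atom F v ⊆ B) with hVB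
  set WC : Finset (G → G → Bool) := Finset.univ.filter (fun w => Atom G w ⊆ C) with hWC
  have hBdec : B = ⋃ v ∈ VB, Atom F v := by
    ext r
    simp only [Set.mem_iUnion, hVB, Finset.mem_filter, Finset.mem_univ, true_and, exists_prop]
    constructor
    · intro hr
      refine ⟨fun x y => r x y, fun r' hr' => hB r r' (fun x y => (hr' x y).symm) hr, fun x y => rfl⟩
    · rintro ⟨v, hsub, hmem⟩
      exact hsub hmem
  have hCdec : C = ⋃ w ∈ WC, Atom G w := by
    ext r
    simp only [Set.mem_iUnion, hWC, Finset.mem_filter, Finset.mem_univ, true_and, exists_prop]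
    constructor
    · intro hr
      refine ⟨fun x y => r x y, fun r' hr' => hC r r' (fun x y => (hr' x y).symm) hr, fun x y => rfl⟩
    · rintro ⟨w, hsub, hmem⟩
      exact hsub hmem
  have hBsum : lam B = ∑ v ∈ VB, lam (Atom F v) := by
    rw [hBdec]
    refine measure_biUnion_finset ?_ (fun v _ => measurableSet_Atom F v)
    intro v _ v' _ hne
    exact atom_disjoint hne
  have hCsum : lam C = ∑ w ∈ WC, lam (Atom G w) := by
    rw [hCdec]
    refine measure_biUnion_finset ?_ (fun w _ => measurableSet_Atom G w)
    intro w _ w' _ hne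
    exact atom_disjoint hne
  have hBC : B ∩ C = ⋃ p ∈ VB ×ˢ WC, Atom F p.1 ∩ Atom G p.2 := by
    rw [hBdec, hCdec]
    ext r
    simp only [Set.mem_inter_iff, Set.mem_iUnion, Finset.mem_product, exists_prop]
    constructor
    · rintro ⟨⟨v, hv1, hv2⟩, ⟨w, hw1, hw2⟩⟩
      exact ⟨(v, w), ⟨hv1, hw1⟩, hv2, hw2⟩
    · rintro ⟨⟨v, w⟩, ⟨hv1, hw1⟩, hv2, hw2⟩
      exact ⟨⟨v, hv1, hv2⟩, ⟨w, hw1, hw2⟩⟩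
  rw [hBC]
  have := measure_biUnion_finset (μ := lam) (s := VB ×ˢ WC)
      (f := fun p => Atom F p.1 ∩ Atom G p.2) ?_ ?_
  · rw [this]
    have : ∀ p ∈ VB ×ˢ WC, lam (Atom F p.1 ∩ Atom G p.2) =
        lam (Atom F p.1) * lam (Atom G p.2) := fun p _ => atom_indep hlam hFG _ _
    rw [Finset.sum_congr rfl this, hBsum, hCsum, Finset.sum_mul_sum, Finset.sum_product]
  · intro p _ q _ hne
    by_cases h1 : p.1 = q.1
    · have h2 : p.2 ≠ q.2 := fun h => hne (Prod.ext h1 h)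
      exact (atom_disjoint h2).mono Set.inter_subset_right Set.inter_subset_right
    · exact (atom_disjoint h1).mono Set.inter_subset_left Set.inter_subset_left
  · exact fun p _ => (measurableSet_Atom F p.1).inter (measurableSet_Atom G p.2)

end Dev5
section Dev6
open scoped Pointwise
variable {N : Type*}

lemma neumann {K : Type*} [Group K] [MulAction K N]
    (horb : ∀ a : N, (MulAction.orbit K a).Infinite) (F : Finset N) :
    ∃ g : K, ∀ a ∈ F, ∀ b ∈ F, g • a ≠ b := by
  classical
  by_contra h
  push_neg at h
  set gg : N × N → K := fun p => if hk : ∃ k : K, k • p.1 = p.2 then hk.choose else 1 with hgg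
  have hcover : ⋃ p ∈ (F ×ˢ F : Finset (N × N)),
      (gg p) • ((MulAction.stabilizer K p.1 : Subgroup K) : Set K) = Set.univ := by
    refine Set.eq_univ_of_forall (fun k => ?_)
    obtain ⟨a, ha, b, hb, hab⟩ := h k
    have hex : ∃ k' : K, k' • (a, b).1 = (a, b).2 := ⟨k, hab⟩
    refine Set.mem_biUnion (show ((a, b) : N × N) ∈ (F ×ˢ F : Finset (N × N)) from
      Finset.mem_product.mpr ⟨ha, hb⟩) ?_
    rw [Set.mem_smul_set_iff_inv_smul_mem]
    have h1 : gg (a, b) • a = b := by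
      rw [hgg]
      simp only [dif_pos hex]
      exact hex.choose_spec
    have h3 : k • a = gg (a, b) • a := by rw [hab]; exact h1.symm
    have h2 : ((gg (a, b))⁻¹ * k) • a = a := by
      rw [mul_smul, h3, inv_smul_smul]
    exact h2
  obtain ⟨p, -, hfin⟩ := Subgroup.exists_finiteIndex_of_leftCoset_cover hcover
  haveI := hfin
  have : Finite (K ⧸ MulAction.stabilizer K p.1) :=
    (MulAction.stabilizer K p.1).finite_quotient_of_finiteIndex
  have : Finite (MulAction.orbit K p.1) :=
    Finite.of_equiv _ (MulAction.orbitEquivQuotientStabilizer K p.1).symm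
  exact (horb p.1) (Set.toFinite _)

/-- the algebra of measurable cylinder sets -/
def Cyl (N : Type*) : Set (Set (N → N → Bool)) :=
  {B | MeasurableSet B ∧ ∃ F : Finset N,
    ∀ r r' : N → N → Bool, (∀ x y : F, r x y = r' x y) → r ∈ B → r' ∈ B}

lemma isSetAlgebra_Cyl : IsSetAlgebra (Cyl N) := by
  constructor
  · exact ⟨MeasurableSet.empty, ∅, fun r r' _ h => h⟩
  · rintro B ⟨hBm, F, hBd⟩
    refine ⟨hBm.compl, F, fun r r' hag hr hmem => ?_⟩
    exact hr (hBd r' r (fun x y => (hag x y).symm) hmem)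
  · rintro B C ⟨hBm, F, hBd⟩ ⟨hCm, G, hCd⟩
    classical
    refine ⟨hBm.union hCm, F ∪ G, fun r r' hag hr => ?_⟩
    rcases hr with hr | hr
    · exact Or.inl (hBd r r' (fun x y =>
        hag ⟨x, Finset.mem_union_left _ x.2⟩ ⟨y, Finset.mem_union_left _ y.2⟩) hr)
    · exact Or.inr (hCd r r' (fun x y =>
        hag ⟨x, Finset.mem_union_right _ x.2⟩ ⟨y, Finset.mem_union_right _ y.2⟩) hr)

lemma generateFrom_Cyl :
    (MeasurableSpace.pi : MeasurableSpace (N → N → Bool)) =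
      MeasurableSpace.generateFrom (Cyl N) := by
  refine le_antisymm (pi_le_of_singles fun a b => ?_) ?_
  · refine MeasurableSpace.measurableSet_generateFrom
      ⟨measurableSet_single a b true, {a, b}, fun r r' hag hr => ?_⟩
    have := hag ⟨a, by simp⟩ ⟨b, by simp⟩
    simp only [Set.mem_setOf_eq] at hr ⊢
    rw [← this]
    exact hr
  · rw [MeasurableSpace.generateFrom_le_iff]
    rintro B ⟨hB, -⟩
    exact hB

end Dev6
/-- if a group `K` acts on a countably infinite set `N` with no finite
orbits, then the uniform measure on `LO N` is `K`-ergodic: any Borel set `A ⊆ LO N`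
that is almost invariant under the induced action `(g · r)(a, b) = r (g⁻¹ a, g⁻¹ b)`
has measure `0` or `1`. -/
theorem uniformLO_ergodic {N : Type*} [Countable N] [Infinite N]
    (K : Type*) [Group K] [MulAction K N]
    (horb : ∀ a : N, (MulAction.orbit K a).Infinite)
    (lam : Measure (N → N → Bool)) (hlam : IsUniformLO lam)
    (A : Set (N → N → Bool)) (hA : MeasurableSet A) (hALO : A ⊆ LO N)
    (hinv : ∀ g : K,
      lam (symmDiff A ((fun r : N → N → Bool => fun a b => r (g⁻¹ • a) (g⁻¹ • b)) '' A)) = 0) :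
    lam A = 0 ∨ lam A = 1 := by
  classical
  have hprob : IsProbabilityMeasure lam := hlam.1
  have hle : ∀ s t : Set (N → N → Bool), lam s ≤ lam t + lam (symmDiff s t) := by
    intro s t
    refine le_trans (measure_mono ?_) (measure_union_le _ _)
    intro r hr
    by_cases h : r ∈ t
    · exact Or.inl h
    · exact Or.inr (Set.mem_symmDiff.mpr (Or.inl ⟨hr, h⟩))
  have key : ∀ ε : ℝ, 0 < ε → ε ≤ 1 →
      lam A ≤ lam A * lam A + 5 * ENNReal.ofReal ε := by
    intro ε hε hε1
    obtain ⟨B, hBmem, hAB⟩ := (Measure.MeasureDense.of_generateFrom_isSetAlgebra_finite (μ := lam)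
      isSetAlgebra_Cyl generateFrom_Cyl).approx A hA (measure_ne_top _ _) ε hε
    obtain ⟨hBmeas, F, hBdep⟩ := hBmem
    obtain ⟨g, hg⟩ := neumann horb F
    set π : Equiv.Perm N := MulAction.toPerm g with hπdef
    have hmap : (fun r : N → N → Bool => fun a b => r (g⁻¹ • a) (g⁻¹ • b)) = obMap π := by
      funext r a b
      rfl
    have himg : ∀ X : Set (N → N → Bool), obMap π '' X = obMap π.symm ⁻¹' X := by
      intro X
      have h1 := obMap_leftInv π
      have h2 := obMap_leftInv π.symm
      rw [Equiv.symm_symm] at h2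
      exact congrFun (Set.image_eq_preimage_of_inverse h1 h2) X
    set T : Set (N → N → Bool) → Set (N → N → Bool) := fun X => obMap π.symm ⁻¹' X with hT
    have hA0 : lam (symmDiff A (T A)) = 0 := by
      have h := hinv g
      rw [hmap, himg A] at h
      exact h
    have hTmeas : ∀ X : Set (N → N → Bool), MeasurableSet X → MeasurableSet (T X) :=
      fun X hX => (measurable_obMap π.symm) hX
    have hTlam : ∀ X : Set (N → N → Bool), MeasurableSet X → lam (T X) = lam X :=
      fun X hX => lam_map_eq hlam π.symm hX
    have hdisjF : Disjoint (F.image (fun a => g • a)) F := by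
      rw [Finset.disjoint_left]
      intro x hx hxF
      simp only [Finset.mem_image] at hx
      obtain ⟨a, haF, rfl⟩ := hx
      exact hg a haF _ hxF rfl
    have hBGdep : ∀ r r' : N → N → Bool,
        (∀ x y : (F.image (fun a => g • a) : Finset N), r x y = r' x y) →
          r ∈ T B → r' ∈ T B := by
      intro r r' hag hr
      refine hBdep _ _ ?_ hr
      intro x y
      have hx : (g • (x : N)) ∈ F.image (fun a => g • a) := Finset.mem_image_of_mem _ x.2
      have hy : (g • (y : N)) ∈ F.image (fun a => g • a) := Finset.mem_image_of_mem _ y.2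
      exact hag ⟨_, hx⟩ ⟨_, hy⟩
    have hind : lam (B ∩ T B) = lam B * lam B := by
      have h := cylinder_indep hlam hdisjF.symm hBdep hBGdep
      rw [h, hTlam B hBmeas]
    set x := lam A with hx
    set y := lam B with hy
    set ε' := ENNReal.ofReal ε with hε'
    have hε'1 : ε' ≤ 1 := ENNReal.ofReal_le_one.mpr hε1
    have hABε : lam (symmDiff A B) ≤ ε' := le_of_lt hAB
    have hTABε : lam (symmDiff (T A) (T B)) ≤ ε' := by
      have h : symmDiff (T A) (T B) = obMap π.symm ⁻¹' (symmDiff A B) :=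
        (Set.preimage_symmDiff _ _).symm
      rw [h, lam_map_eq hlam π.symm (hA.symmDiff hBmeas)]
      exact hABε
    have h1 : x ≤ lam (A ∩ T A) := by
      have hsub : symmDiff A (A ∩ T A) ⊆ symmDiff A (T A) := by
        intro r hr
        simp only [Set.mem_symmDiff, Set.mem_inter_iff] at hr ⊢
        tauto
      calc x ≤ lam (A ∩ T A) + lam (symmDiff A (A ∩ T A)) := hle _ _
        _ ≤ lam (A ∩ T A) + lam (symmDiff A (T A)) := add_le_add_right (measure_mono hsub) _
        _ = lam (A ∩ T A) := by rw [hA0, add_zero]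
    have h2 : lam (A ∩ T A) ≤ y * y + (ε' + ε') := by
      have hsub : symmDiff (A ∩ T A) (B ∩ T B) ⊆ symmDiff A B ∪ symmDiff (T A) (T B) := by
        intro r hr
        simp only [Set.mem_symmDiff, Set.mem_inter_iff, Set.mem_union] at hr ⊢
        tauto
      calc lam (A ∩ T A) ≤ lam (B ∩ T B) + lam (symmDiff (A ∩ T A) (B ∩ T B)) := hle _ _
        _ ≤ y * y + (lam (symmDiff A B) + lam (symmDiff (T A) (T B))) := by
            refine add_le_add (le_of_eq hind) ?_
            exact le_trans (measure_mono hsub) (measure_union_le _ _)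
        _ ≤ y * y + (ε' + ε') := add_le_add_right (add_le_add hABε hTABε) _
    have hyx : y ≤ x + ε' := by
      calc y ≤ x + lam (symmDiff B A) := hle B A
        _ = x + lam (symmDiff A B) := by rw [symmDiff_comm]
        _ ≤ x + ε' := add_le_add_right hABε _
    have hx1 : x ≤ 1 := prob_le_one
    have hyy : y * y ≤ x * x + 3 * ε' := by
      calc y * y ≤ (x + ε') * (x + ε') := mul_le_mul' hyx hyx
        _ = x * x + (x * ε' + ε' * x + ε' * ε') := by ring
        _ ≤ x * x + (1 * ε' + ε' * 1 + ε' * 1) := by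
            refine add_le_add_right ?_ _
            refine add_le_add (add_le_add (mul_le_mul_left hx1 _)
              (mul_le_mul_right hx1 _)) (mul_le_mul_right hε'1 _)
        _ = x * x + 3 * ε' := by ring
    calc x ≤ lam (A ∩ T A) := h1
      _ ≤ y * y + (ε' + ε') := h2
      _ ≤ (x * x + 3 * ε') + (ε' + ε') := add_le_add_left hyy _
      _ = x * x + 5 * ε' := by ring
  have hxx : lam A ≤ lam A * lam A := by
    refine ENNReal.le_of_forall_pos_le_add (fun η hη _ => ?_)
    have hεpos : (0 : ℝ) < min ((η : ℝ) / 5) 1 := lt_min (by positivity) one_pos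
    refine le_trans (key _ hεpos (min_le_right _ _)) (add_le_add_right ?_ _)
    have h5 : ENNReal.ofReal (min ((η : ℝ) / 5) 1) ≤ ENNReal.ofReal ((η : ℝ) / 5) :=
      ENNReal.ofReal_le_ofReal (min_le_left _ _)
    calc 5 * ENNReal.ofReal (min ((η : ℝ) / 5) 1)
        ≤ 5 * ENNReal.ofReal ((η : ℝ) / 5) := mul_le_mul_right h5 _
      _ = ENNReal.ofReal (5 * ((η : ℝ) / 5)) := by
          rw [ENNReal.ofReal_mul (by norm_num : (0:ℝ) ≤ 5), ENNReal.ofReal_ofNat]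
      _ = ENNReal.ofReal ((η : ℝ)) := by
          congr 1
          field_simp
      _ = (η : ℝ≥0∞) := ENNReal.ofReal_coe_nnreal
  have hxx2 : lam A * lam A ≤ lam A :=
    le_trans (mul_le_mul_left prob_le_one _) (le_of_eq (one_mul _))
  have heq : lam A = lam A * lam A := le_antisymm hxx hxx2
  by_contra hcon
  push_neg at hcon
  obtain ⟨h0, h1⟩ := hcon
  have hlt : lam A < 1 := lt_of_le_of_ne prob_le_one h1
  have hfin : lam A * lam A < 1 * lam A :=
    by have := ENNReal.mul_lt_mul_right h0 (measure_ne_top _ _) hlt; rwa [mul_comm (lam A) 1] at this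
  rw [one_mul, ← heq] at hfin
  exact lt_irrefl _ hfin
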